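/- For every m ∈ ℕ with m ≥ 1, ∫_ℝ dx/(cosh x)^{2m+2} ≤ 2/√m. -/

import Mathlib

open MeasureTheory Real Set

theorem stmt_7 (m : ℕ) (hm : 1 ≤ m) :
    (∫ x : ℝ, 1 / Real.cosh x ^ (2 * m + 2)) ≤ 2 / Real.sqrt m := by
  set f : ℝ → ℝ := fun x => Real.sinh x / Real.cosh x with hf
  set g : ℝ → ℝ := fun t => Real.exp (-(m : ℝ) * t ^ 2) with hg
  have hm0 : (0 : ℝ) < m := by exact_mod_cast hm
  have hderiv : ∀ x : ℝ, HasDerivAt f (1 / Real.cosh x ^ 2) x := by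
    intro x
    have h := (Real.hasDerivAt_sinh x).div (Real.hasDerivAt_cosh x)
      (Real.cosh_pos x).ne'
    refine h.congr_deriv ?_
    rw [div_eq_div_iff (by positivity) (by positivity)]
    nlinarith [Real.cosh_sq_sub_sinh_sq x]
  have hmono : StrictMono f := by
    apply strictMono_of_deriv_pos
    intro x
    rw [(hderiv x).deriv]
    positivity
  have hgint : Integrable g := integrable_exp_neg_mul_sq hm0
  have key : ∫ t in f '' univ, g t = ∫ x, |1 / Real.cosh x ^ 2| • g (f x) := by
    rw [integral_image_eq_integral_abs_deriv_smul MeasurableSet.univ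
      (fun x _ => (hderiv x).hasDerivWithinAt) hmono.injective.injOn g]
    simp [Measure.restrict_univ]
  have hint : Integrable (fun x => |1 / Real.cosh x ^ 2| • g (f x)) := by
    rw [← integrableOn_univ]
    rw [← integrableOn_image_iff_integrableOn_abs_deriv_smul MeasurableSet.univ
      (fun x _ => (hderiv x).hasDerivWithinAt) hmono.injective.injOn g]
    exact hgint.integrableOn
  have step1 : (∫ x : ℝ, 1 / Real.cosh x ^ (2 * m + 2))
      ≤ ∫ x, |1 / Real.cosh x ^ 2| • g (f x) := by
    apply integral_mono_of_nonneg
    · filter_upwards with x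
      positivity
    · exact hint
    · filter_upwards with x
      have hc : (0:ℝ) < Real.cosh x := Real.cosh_pos x
      have hsq : Real.sinh x ^ 2 = Real.cosh x ^ 2 - 1 := by
        nlinarith [Real.cosh_sq_sub_sinh_sq x]
      have htanh : (f x) ^ 2 = 1 - 1 / Real.cosh x ^ 2 := by
        simp only [hf]
        rw [div_pow, hsq]
        field_simp
      have h1 : (1 / Real.cosh x ^ 2) ^ m ≤ Real.exp (-(m:ℝ) * (f x) ^ 2) := by
        have hb : 1 / Real.cosh x ^ 2 ≤ Real.exp (-(f x ^ 2)) := by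
          rw [htanh]
          have h2 := Real.add_one_le_exp (-(1 - 1 / Real.cosh x ^ 2))
          linarith
        calc (1 / Real.cosh x ^ 2) ^ m ≤ (Real.exp (-(f x ^ 2))) ^ m :=
              pow_le_pow_left₀ (by positivity) hb m
          _ = Real.exp (-(m:ℝ) * f x ^ 2) := by rw [← Real.exp_nat_mul]; ring_nf
      have this2 : 1 / Real.cosh x ^ (2 * m + 2)
          = (1 / Real.cosh x ^ 2) ^ m * (1 / Real.cosh x ^ 2) := by
        rw [show Real.cosh x ^ (2 * m + 2) = (Real.cosh x ^ 2) ^ m * Real.cosh x ^ 2 by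
          rw [← pow_mul, ← pow_add]]
        field_simp
        rw [← mul_pow, mul_one_div_cancel (by positivity), one_pow]
      rw [this2]
      have habs : |1 / Real.cosh x ^ 2| = 1 / Real.cosh x ^ 2 := abs_of_nonneg (by positivity)
      rw [smul_eq_mul, habs, mul_comm]
      apply mul_le_mul_of_nonneg_left h1 (by positivity)
  have step2 : ∫ t in f '' univ, g t ≤ ∫ t, g t := by
    apply setIntegral_le_integral hgint
    filter_upwards with t
    positivity
  have step3 : (∫ t, g t) = Real.sqrt (π / m) := integral_gaussian m
  have step4 : Real.sqrt (π / m) ≤ 2 / Real.sqrt m := by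
    rw [Real.sqrt_div Real.pi_pos.le]
    have h2 : Real.sqrt π ≤ 2 := by
      calc Real.sqrt π ≤ Real.sqrt 4 := Real.sqrt_le_sqrt (by linarith [Real.pi_le_four])
        _ = 2 := by rw [show (4:ℝ) = 2 ^ 2 by norm_num, Real.sqrt_sq (by norm_num)]
    gcongr
  calc (∫ x : ℝ, 1 / Real.cosh x ^ (2 * m + 2))
      ≤ ∫ x, |1 / Real.cosh x ^ 2| • g (f x) := step1
    _ = ∫ t in f '' univ, g t := key.symm
    _ ≤ ∫ t, g t := step2
    _ = Real.sqrt (π / m) := step3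
    _ ≤ 2 / Real.sqrt m := step4
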